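/- Let n ≥ 2 and m > n + 2. For every function A that maps each profile of preference rankings (one strict total order over the m goods per agent) to an allocation of the goods, there exist a profile of rankings ≻ = (≻_1,…,≻_n) and a profile of nonnegative additive valuations (v_1,…,v_n) consistent with ≻ such that the allocation A(≻) is not α-EFX with respect to (v_1,…,v_n) for any α > 1/(m−n). -/

import Mathlib

/-- For `m > n + 2`, no ordinal algorithm (a function from profiles of
strict total orders on the goods to allocations) can always compute an `α`-EFX allocation
for any `α > 1/(m-n)`: there is a profile of rankings and a consistent profile of
nonnegative additive valuations for which the output allocation is not `α`-EFX for any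
`α > 1/(m-n)`. -/
theorem stmt_2 (n m : ℕ) (hn : 2 ≤ n) (hm : n + 2 < m)
    (A : (Fin n → Fin m → Fin m → Prop) → (Fin n → Finset (Fin m)))
    (hA : ∀ pref : Fin n → Fin m → Fin m → Prop,
      (∀ i, IsStrictTotalOrder (Fin m) (pref i)) →
      (∀ i j : Fin n, i ≠ j → Disjoint (A pref i) (A pref j)) ∧
      (∀ g : Fin m, ∃ i : Fin n, g ∈ A pref i)) :
    ∃ (pref : Fin n → Fin m → Fin m → Prop) (v : Fin n → Fin m → ℝ),
      (∀ i, IsStrictTotalOrder (Fin m) (pref i)) ∧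
      (∀ i g, 0 ≤ v i g) ∧
      (∀ i : Fin n, ∀ g g' : Fin m, pref i g g' → v i g' ≤ v i g) ∧
      (∀ α : ℝ, 1 / ((m : ℝ) - (n : ℝ)) < α →
        ¬ (∀ i j : Fin n, A pref j ≠ ∅ → ∀ g ∈ A pref j,
            α * ((A pref j).erase g).sum (v i) ≤ (A pref i).sum (v i))) := by
  classical
  set pref : Fin n → Fin m → Fin m → Prop := fun _ g g' => g < g' with hpref
  have hsto : ∀ i, IsStrictTotalOrder (Fin m) (pref i) := fun i => inferInstance
  obtain ⟨hdisj, hcover⟩ := hA pref hsto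
  set X := A pref with hX
  -- basic numeric facts
  have hmnR : ((n : ℝ)) + 2 < (m : ℝ) := by exact_mod_cast hm
  have hnR : (0 : ℝ) ≤ (n : ℝ) := by positivity
  have hdpos : (0 : ℝ) < (m : ℝ) - n := by linarith
  have hmRpos : (0 : ℝ) < (m : ℝ) := by linarith
  -- the bundles partition all m goods
  have huniv : Finset.univ.biUnion X = Finset.univ := by
    apply Finset.eq_univ_of_forall
    intro g
    obtain ⟨i, hi⟩ := hcover g
    exact Finset.mem_biUnion.mpr ⟨i, Finset.mem_univ i, hi⟩
  have hsum : ∑ k, (X k).card = m := by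
    have h1 := Finset.card_biUnion (s := Finset.univ) (t := X)
      (fun x _ y _ hxy => hdisj x y hxy)
    rw [huniv, Finset.card_univ, Fintype.card_fin] at h1
    omega
  by_cases hemp : ∃ i, X i = ∅
  · -- Case (a): some bundle is empty
    obtain ⟨i, hi⟩ := hemp
    have hj : ∃ j, 2 ≤ (X j).card := by
      by_contra hc
      push_neg at hc
      have h2 : ∑ k, (X k).card ≤ ∑ _k : Fin n, 1 :=
        Finset.sum_le_sum (fun k _ => by have := hc k; omega)
      simp at h2
      omega
    obtain ⟨j, hj2⟩ := hj
    have hXjne : (X j).Nonempty := Finset.card_pos.mp (by omega)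
    refine ⟨pref, fun _ _ => 1, hsto, fun _ _ => zero_le_one,
      fun _ _ _ _ => le_refl 1, ?_⟩
    intro α hα hcon
    have hαpos : 0 < α := lt_trans (by positivity) hα
    have hg := (X j).max'_mem hXjne
    have hkey := hcon i j (Finset.nonempty_iff_ne_empty.mp hXjne) _ hg
    rw [← hX, hi, Finset.sum_empty, Finset.sum_const, nsmul_eq_mul, mul_one] at hkey
    have hc1 : 1 ≤ ((X j).erase ((X j).max' hXjne)).card := by
      rw [Finset.card_erase_of_mem hg]; omega
    have hc1R : (1 : ℝ) ≤ (((X j).erase ((X j).max' hXjne)).card : ℝ) := by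
      exact_mod_cast hc1
    nlinarith
  · -- Case (b): all bundles nonempty
    push_neg at hemp
    have hne : ∀ k, (X k).Nonempty := fun k => hemp k
    have hunivne : (Finset.univ : Finset (Fin n)).Nonempty :=
      ⟨⟨0, by omega⟩, Finset.mem_univ _⟩
    obtain ⟨i, -, hmax⟩ := Finset.exists_max_image Finset.univ
      (fun k => (X k).min' (hne k)) hunivne
    set b := (X i).min' (hne i) with hb
    have hminlt : ∀ j, j ≠ i → (X j).min' (hne j) < b := by
      intro j hji
      refine lt_of_le_of_ne (hmax j (Finset.mem_univ j)) ?_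
      intro he
      have h1 : b ∈ X j := he ▸ Finset.min'_mem (X j) (hne j)
      exact (Finset.disjoint_left.mp (hdisj j i hji) h1) (Finset.min'_mem (X i) (hne i))
    by_cases h2 : ∃ j, j ≠ i ∧ 2 ≤ (X j).card
    · -- Case (b1)
      obtain ⟨j, hji, hj2⟩ := h2
      set ε : ℝ := 1 / (m : ℝ) ^ 2 with hε
      have hεpos : 0 < ε := by positivity
      have hε1 : ε ≤ 1 := by
        rw [hε]
        rw [div_le_one (by positivity)]
        nlinarith
      set v : Fin m → ℝ := fun g => if g < b then 1 else ε with hv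
      have hvnn : ∀ g, 0 ≤ v g := by
        intro g; rw [hv]; dsimp only; split <;> [exact zero_le_one; exact hεpos.le]
      have hvmono : ∀ g g' : Fin m, g < g' → v g' ≤ v g := by
        intro g g' hgg'
        rw [hv]; dsimp only
        by_cases h' : g' < b
        · rw [if_pos h', if_pos (lt_trans hgg' h')]
        · rw [if_neg h']
          split <;> [exact hε1; exact le_refl _]
      refine ⟨pref, fun _ => v, hsto, fun _ g => hvnn g, fun _ g g' h => hvmono g g' h, ?_⟩
      intro α hα hcon
      have hαpos : 0 < α := lt_trans (by positivity) hα
      have hXjne := hne j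
      have hg := (X j).max'_mem hXjne
      have hkey := hcon i j (Finset.nonempty_iff_ne_empty.mp hXjne) _ hg
      rw [← hX] at hkey
      -- lower bound on the erased sum: min' X j is in it and has value 1
      have hminmax : (X j).min' hXjne < (X j).max' hXjne :=
        Finset.min'_lt_max'_of_card _ (by omega)
      have hmemE : (X j).min' hXjne ∈ (X j).erase ((X j).max' hXjne) :=
        Finset.mem_erase.mpr ⟨ne_of_lt hminmax, Finset.min'_mem _ _⟩
      have hS : (1 : ℝ) ≤ ((X j).erase ((X j).max' hXjne)).sum v := by
        have h1 : v ((X j).min' hXjne) ≤ _ :=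
          Finset.single_le_sum (fun g _ => hvnn g) hmemE
        have h2 : v ((X j).min' hXjne) = 1 := by
          rw [hv]; dsimp only; rw [if_pos (hminlt j hji)]
        linarith [h1, h2.ge, h2.le]
      -- upper bound on v(X i)
      have hT : (X i).sum v ≤ (m : ℝ) * ε := by
        have h1 : ∀ g ∈ X i, v g ≤ ε := by
          intro g hg'
          have : ¬ g < b := not_lt.mpr (Finset.min'_le _ _ hg')
          rw [hv]; dsimp only; rw [if_neg this]
        calc (X i).sum v ≤ (X i).card • ε := Finset.sum_le_card_nsmul _ _ _ h1
          _ = ((X i).card : ℝ) * ε := by rw [nsmul_eq_mul]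
          _ ≤ (m : ℝ) * ε := by
              apply mul_le_mul_of_nonneg_right _ hεpos.le
              have : (X i).card ≤ m := by
                have := Finset.card_le_univ (X i)
                simpa using this
              exact_mod_cast this
      have hmε : (m : ℝ) * ε = 1 / (m : ℝ) := by
        rw [hε]; field_simp
      have h1m : 1 / (m : ℝ) ≤ 1 / ((m : ℝ) - n) :=
        one_div_le_one_div_of_le hdpos (by linarith)
      have hαS : α ≤ α * ((X j).erase ((X j).max' hXjne)).sum v :=
        le_mul_of_one_le_right hαpos.le hS
      linarith
    · -- Case (b2): all other bundles are singletons
      push_neg at h2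
      have hsmall : ∀ j, j ≠ i → (X j).card ≤ 1 := fun j hj => by
        by_contra hc; exact absurd (h2 j hj) (by omega)
      have hXi : m - n + 1 ≤ (X i).card := by
        have h3 : ∑ k ∈ Finset.univ.erase i, (X k).card ≤
            ∑ _k ∈ Finset.univ.erase i, 1 :=
          Finset.sum_le_sum (fun k hk => hsmall k (Finset.mem_erase.mp hk).1)
        have h4 : ∑ k ∈ Finset.univ.erase i, (X k).card + (X i).card =
            ∑ k, (X k).card := Finset.sum_erase_add _ _ (Finset.mem_univ i)
        have h5 : ∑ _k ∈ Finset.univ.erase i, 1 = n - 1 := by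
          rw [Finset.sum_const, smul_eq_mul, mul_one, Finset.card_erase_of_mem
            (Finset.mem_univ i), Finset.card_univ, Fintype.card_fin]
        omega
      obtain ⟨j, hji⟩ : ∃ j : Fin n, j ≠ i := by
        have : Nontrivial (Fin n) := Fin.nontrivial_iff_two_le.mpr hn
        exact exists_ne i
      refine ⟨pref, fun _ _ => 1, hsto, fun _ _ => zero_le_one,
        fun _ _ _ _ => le_refl 1, ?_⟩
      intro α hα hcon
      have hαpos : 0 < α := lt_trans (by positivity) hα
      have hXine := hne i
      have hg := (X i).max'_mem hXine
      have hkey := hcon j i (Finset.nonempty_iff_ne_empty.mp hXine) _ hg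
      rw [← hX, Finset.sum_const, Finset.sum_const, nsmul_eq_mul, nsmul_eq_mul,
        mul_one, mul_one] at hkey
      have hcE : m - n ≤ ((X i).erase ((X i).max' hXine)).card := by
        rw [Finset.card_erase_of_mem hg]; omega
      have hcER : (m : ℝ) - n ≤ (((X i).erase ((X i).max' hXine)).card : ℝ) := by
        have h6 : ((m - n : ℕ) : ℝ) ≤ (((X i).erase ((X i).max' hXine)).card : ℝ) := by
          exact_mod_cast hcE
        rwa [Nat.cast_sub (by omega)] at h6
      have hTj : ((X j).card : ℝ) ≤ 1 := by exact_mod_cast hsmall j hji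
      have hα1 : 1 < α * ((m : ℝ) - n) := by
        rw [div_lt_iff₀ hdpos] at hα; linarith
      nlinarith
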